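/- (Alzer–Kwong) For every positive integer m and every natural number ν with 0 ≤ ν ≤ m−1, one has ∑_{k=0, k+m odd}^{m-1} C(m,k)·C(k+m,ν)·C(k+m−ν, m−1−ν)·B_{k+1} = (−1)^{m}·(m/2)·C(m−1,ν), where the sum on the left runs only over those indices k in {0,…,m−1} for which k+m is odd. -/

import Mathlib

open Finset

/-- `AK_U n s = ∑_{j=0}^n C(n,j) B_{s+j}` -/
def AK_U (n s : ℕ) : ℚ := ∑ j ∈ range (n + 1), (n.choose j : ℚ) * bernoulli (s + j)

lemma AK_bernoulli_odd {n : ℕ} (h : Odd n) (h1 : n ≠ 1) : bernoulli n = 0 := by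
  rw [bernoulli_eq_bernoulli'_of_ne_one h1]
  exact bernoulli'_eq_zero_of_odd h (lt_of_le_of_ne h.pos (fun e => h1 e.symm))

lemma AK_U_succ (n s : ℕ) : AK_U (n + 1) s = AK_U n s + AK_U n (s + 1) := by
  unfold AK_U
  rw [Finset.sum_range_succ' (fun j => ((n+1).choose j : ℚ) * bernoulli (s + j))]
  simp only [Nat.choose_succ_succ, Nat.cast_add, add_mul, Nat.choose_zero_right]
  rw [Finset.sum_add_distrib]
  have h1 : ∑ j ∈ range (n + 1), (n.choose (j+1) : ℚ) * bernoulli (s + (j+1))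
      = ∑ j ∈ range (n + 1), (n.choose j : ℚ) * bernoulli (s + j) - 1 * bernoulli (s + 0) := by
    set f : ℕ → ℚ := fun j => (n.choose j : ℚ) * bernoulli (s + j) with hf
    have e1 := Finset.sum_range_succ' f (n + 1)
    have e2 := Finset.sum_range_succ f (n + 1)
    have e3 : f (n + 1) = 0 := by simp [hf, Nat.choose_succ_self]
    have e4 : f 0 = 1 * bernoulli (s + 0) := by simp [hf]
    have : ∑ j ∈ range (n + 1), f (j + 1) = ∑ j ∈ range (n + 1), f j - f 0 := by
      rw [eq_sub_iff_add_eq, ← e1, e2, e3, add_zero]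
    simpa [hf, e4] using this
  have h2 : ∑ j ∈ range (n + 1), (n.choose j : ℚ) * bernoulli (s + (j+1))
      = ∑ j ∈ range (n + 1), (n.choose j : ℚ) * bernoulli (s + 1 + j) := by
    apply Finset.sum_congr rfl; intro j _; ring_nf
  rw [h1, h2]
  ring

lemma AK_U_zero (s : ℕ) : AK_U 0 s = bernoulli s := by
  simp [AK_U]

lemma AK_U_symm (n s : ℕ) : AK_U n s = (-1 : ℚ) ^ (n + s) * AK_U s n := by
  induction n generalizing s with
  | zero =>
    rw [AK_U_zero]
    have h : AK_U s 0 = (if s = 1 then (1:ℚ) else 0) + bernoulli s := by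
      unfold AK_U
      rw [Finset.sum_range_succ]
      simp only [zero_add, Nat.choose_self, Nat.cast_one, one_mul]
      rw [sum_bernoulli]
    rw [h, zero_add]
    rcases Nat.even_or_odd s with he | ho
    · have : s ≠ 1 := by rintro rfl; exact (Nat.not_even_iff_odd.2 (by norm_num)) he
      rw [if_neg this, he.neg_one_pow]; ring
    · rcases eq_or_ne s 1 with rfl | h1
      · norm_num
      · rw [if_neg h1, AK_bernoulli_odd ho h1, ho.neg_one_pow]; ring
  | succ n ih =>
    rw [AK_U_succ, ih s, ih (s+1)]
    have hs : AK_U s (n + 1) = AK_U (s + 1) n - AK_U s n := by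
      rw [AK_U_succ s n]; ring
    rw [hs]
    have : (-1 : ℚ) ^ (n + 1 + s) = -(-1 : ℚ) ^ (n + s) := by
      rw [show n + 1 + s = (n + s) + 1 by ring, pow_succ]; ring
    rw [this, show n + (s + 1) = (n + s) + 1 by ring, pow_succ]
    ring

lemma AK_choose_expand (m k : ℕ) (hk : k ≤ m) :
    m.choose k * (m + k).choose (k + 1)
      = ∑ r ∈ range (k + 1), m.choose (r + 1) * (m.choose r * (m - r).choose (k - r)) := by
  rw [Nat.add_choose_eq, Finset.Nat.sum_antidiagonal_eq_sum_range_succ_mk, Finset.mul_sum,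
    Finset.sum_range_succ' (fun i => m.choose k * (m.choose i * k.choose (k + 1 - i))) (k + 1)]
  have h0 : m.choose k * (m.choose 0 * k.choose (k + 1 - 0)) = 0 := by
    simp [Nat.choose_succ_self]
  rw [h0, add_zero]
  apply Finset.sum_congr rfl
  intro r hr
  have hrk : r ≤ k := Nat.lt_succ_iff.mp (Finset.mem_range.mp hr)
  have e1 : k + 1 - (r + 1) = k - r := by omega
  rw [e1, Nat.choose_symm hrk, mul_left_comm, Nat.choose_mul (n := m) hrk]

lemma AK_T (m : ℕ) (hm : Even m) :
    ∑ k ∈ range (m + 1), (m.choose k : ℚ) * ((m + k).choose (k + 1)) * bernoulli (k + 1)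
      = 0 := by
  have step1 : ∑ k ∈ range (m + 1), (m.choose k : ℚ) * ((m + k).choose (k + 1)) * bernoulli (k + 1)
      = ∑ k ∈ range (m + 1), ∑ r ∈ range (k + 1),
          (m.choose (r+1) : ℚ) * (m.choose r) * ((m - r).choose (k - r)) * bernoulli (k + 1) := by
    apply Finset.sum_congr rfl
    intro k hk
    have hkm : k ≤ m := Nat.lt_succ_iff.mp (Finset.mem_range.mp hk)
    rw [← Finset.sum_mul]
    congr 1
    have hc := congrArg (fun x : ℕ => (x : ℚ)) (AK_choose_expand m k hkm)
    push_cast at hc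
    rw [hc]
    exact Finset.sum_congr rfl (fun i _ => by ring)
  have step2 : ∑ k ∈ range (m + 1), ∑ r ∈ range (k + 1),
          (m.choose (r+1) : ℚ) * (m.choose r) * ((m - r).choose (k - r)) * bernoulli (k + 1)
      = ∑ r ∈ range (m + 1), (m.choose (r+1) : ℚ) * (m.choose r) * AK_U (m - r) (r + 1) := by
    have hcomm := Finset.sum_Ico_Ico_comm 0 (m + 1)
      (fun r k => (m.choose (r+1) : ℚ) * (m.choose r) * ((m - r).choose (k - r)) * bernoulli (k + 1))
    simp only [Nat.Ico_zero_eq_range] at hcomm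
    rw [← hcomm]
    apply Finset.sum_congr rfl
    intro r hr
    have hrm : r ≤ m := Nat.lt_succ_iff.mp (Finset.mem_range.mp hr)
    rw [Finset.sum_Ico_eq_sum_range]
    have hlen : m + 1 - r = (m - r) + 1 := by omega
    rw [hlen, AK_U, Finset.mul_sum]
    apply Finset.sum_congr rfl
    intro j _
    have e1 : r + j - r = j := by omega
    have e2 : r + j + 1 = r + 1 + j := by omega
    rw [e1, e2]
    ring
  rw [step1, step2, Finset.sum_range_succ]
  simp only [Nat.choose_succ_self, Nat.cast_zero, zero_mul, mul_zero, add_zero]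
  have hrefl := Finset.sum_range_reflect
    (fun r => (m.choose (r+1) : ℚ) * (m.choose r) * AK_U (m - r) (r + 1)) m
  have hneg : ∀ j ∈ range m,
      (m.choose (m - 1 - j + 1) : ℚ) * (m.choose (m - 1 - j)) * AK_U (m - (m - 1 - j)) (m - 1 - j + 1)
      = - ((m.choose (j+1) : ℚ) * (m.choose j) * AK_U (m - j) (j + 1)) := by
    intro j hj
    have hjm : j < m := Finset.mem_range.mp hj
    have e1 : m - 1 - j + 1 = m - j := by omega
    have e2 : m - (m - 1 - j) = j + 1 := by omega
    rw [e1, e2]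
    have e3 : m.choose (m - j) = m.choose j := Nat.choose_symm (le_of_lt hjm)
    have e4 : m.choose (m - 1 - j) = m.choose (j + 1) := by
      have h5 : m - 1 - j = m - (j + 1) := by omega
      rw [h5]; exact Nat.choose_symm hjm
    rw [e3, e4, AK_U_symm (j+1) (m - j)]
    have e5 : (j + 1) + (m - j) = m + 1 := by omega
    have e6 : (-1 : ℚ) ^ (m + 1) = -1 := by
      rw [pow_succ, hm.neg_one_pow]; ring
    rw [e5, e6]
    ring
  have h2 : ∑ j ∈ range m, (m.choose (j+1) : ℚ) * (m.choose j) * AK_U (m - j) (j + 1)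
      = - ∑ j ∈ range m, (m.choose (j+1) : ℚ) * (m.choose j) * AK_U (m - j) (j + 1) := by
    conv_lhs => rw [← hrefl]
    rw [← Finset.sum_neg_distrib]
    exact Finset.sum_congr rfl hneg
  linarith

lemma AK_choose_pred (m : ℕ) (hm : 0 < m) : m.choose (m - 1) = m := by
  have h1 : (1 : ℕ) ≤ m := hm
  rw [Nat.choose_symm h1, Nat.choose_one_right]

lemma AK_key (m : ℕ) (hm : 0 < m) :
    ∑ k ∈ (Finset.range m).filter (fun k => Odd (k + m)),
      (m.choose k : ℚ) * ((k + m).choose (m - 1)) * bernoulli (k + 1)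
    = (-1 : ℚ) ^ m * (m / 2) := by
  rcases Nat.even_or_odd m with hme | hmo
  · -- m even
    have hchoose : ∀ k, ((k + m).choose (m - 1)) = ((m + k).choose (k + 1)) := by
      intro k
      have h1 : m - 1 ≤ m + k := by omega
      have h2 : m + k - (m - 1) = k + 1 := by omega
      rw [add_comm k m, ← Nat.choose_symm h1, h2]
    have T := AK_T m hme
    have hsplit : ∑ k ∈ range (m + 1), (m.choose k : ℚ) * ((m + k).choose (k + 1)) * bernoulli (k + 1)
        = (∑ k ∈ range m, (m.choose k : ℚ) * ((k + m).choose (m - 1)) * bernoulli (k + 1))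
          + (m.choose m : ℚ) * ((m + m).choose (m + 1)) * bernoulli (m + 1) := by
      rw [Finset.sum_range_succ]
      congr 1
      exact Finset.sum_congr rfl (fun k _ => by rw [hchoose k])
    have hlast : bernoulli (m + 1) = 0 := by
      apply AK_bernoulli_odd (Even.add_one hme)
      omega
    rw [hsplit, hlast, mul_zero, add_zero] at T
    have hfil := Finset.sum_filter_add_sum_filter_not (range m) (fun k => Odd (k + m))
      (fun k => (m.choose k : ℚ) * ((k + m).choose (m - 1)) * bernoulli (k + 1))
    have hnot : ∑ k ∈ (range m).filter (fun k => ¬ Odd (k + m)),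
        (m.choose k : ℚ) * ((k + m).choose (m - 1)) * bernoulli (k + 1) = - (m / 2) := by
      rw [Finset.sum_eq_single_of_mem 0]
      · simp only [Nat.choose_zero_right, Nat.cast_one, one_mul, zero_add, bernoulli_one,
          AK_choose_pred m hm]
        ring
      · simp only [Finset.mem_filter, Finset.mem_range]
        constructor
        · exact hm
        · rw [Nat.not_odd_iff_even, zero_add]; exact hme
      · intro k hk hk0
        simp only [Finset.mem_filter, Finset.mem_range, Nat.not_odd_iff_even] at hk
        have hkeven : Even k := by
          rcases hk with ⟨_, h⟩
          rcases Nat.even_or_odd k with h' | h'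
          · exact h'
          · exact absurd (h'.add_even hme) (Nat.not_odd_iff_even.mpr h)
        have : bernoulli (k + 1) = 0 := by
          apply AK_bernoulli_odd (hkeven.add_one)
          omega
        rw [this, mul_zero]
    have : ∑ k ∈ (range m).filter (fun k => Odd (k + m)),
        (m.choose k : ℚ) * ((k + m).choose (m - 1)) * bernoulli (k + 1) = m / 2 := by
      rw [T, hnot] at hfil
      linarith
    rw [this, hme.neg_one_pow, one_mul]
  · -- m odd
    rw [Finset.sum_eq_single_of_mem 0]
    · simp only [Nat.choose_zero_right, Nat.cast_one, one_mul, zero_add, bernoulli_one,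
        AK_choose_pred m hm, hmo.neg_one_pow]
      ring
    · simp only [Finset.mem_filter, Finset.mem_range]
      exact ⟨hm, by rw [zero_add]; exact hmo⟩
    · intro k hk hk0
      simp only [Finset.mem_filter, Finset.mem_range] at hk
      have hkeven : Even k := by
        rcases hk with ⟨_, h⟩
        rcases Nat.even_or_odd k with h' | h'
        · exact h'
        · exact absurd h (by simpa [Nat.not_odd_iff_even] using h'.add_odd hmo)
      have : bernoulli (k + 1) = 0 := by
        apply AK_bernoulli_odd (hkeven.add_one)
        omega
      rw [this, mul_zero]

theorem alzer_kwong_numbers_2 (m : ℕ) (hm : 0 < m) (ν : ℕ) (hν : ν + 1 ≤ m) :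
    ∑ k ∈ (Finset.range m).filter (fun k => Odd (k + m)),
      (m.choose k : ℚ) * ((k + m).choose ν) * ((k + m - ν).choose (m - 1 - ν)) *
        bernoulli (k + 1)
    = (-1 : ℚ) ^ m * (m / 2) * ((m - 1).choose ν) := by
  have key := AK_key m hm
  have hterm : ∀ k, (m.choose k : ℚ) * ((k + m).choose ν) * ((k + m - ν).choose (m - 1 - ν)) *
        bernoulli (k + 1)
      = ((m - 1).choose ν : ℚ) *
        ((m.choose k : ℚ) * ((k + m).choose (m - 1)) * bernoulli (k + 1)) := by
    intro k
    have h1 : m - 1 ≤ k + m := by omega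
    have h2 : ν ≤ m - 1 := by omega
    have := Nat.choose_mul (n := k + m) h2
    have hc := congrArg (fun x : ℕ => (x : ℚ)) this
    push_cast at hc
    rw [mul_comm ((m.choose k : ℚ)) _]
    calc ((k + m).choose ν : ℚ) * (m.choose k) * ((k + m - ν).choose (m - 1 - ν)) * bernoulli (k + 1)
        = ((k + m).choose ν : ℚ) * ((k + m - ν).choose (m - 1 - ν)) * ((m.choose k) * bernoulli (k + 1)) := by ring
      _ = ((k + m).choose (m-1) : ℚ) * ((m - 1).choose ν) * ((m.choose k) * bernoulli (k + 1)) := by rw [← hc]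
      _ = ((m - 1).choose ν : ℚ) * ((m.choose k : ℚ) * ((k + m).choose (m - 1)) * bernoulli (k + 1)) := by ring
  calc ∑ k ∈ (Finset.range m).filter (fun k => Odd (k + m)),
      (m.choose k : ℚ) * ((k + m).choose ν) * ((k + m - ν).choose (m - 1 - ν)) * bernoulli (k + 1)
      = ∑ k ∈ (Finset.range m).filter (fun k => Odd (k + m)),
        ((m - 1).choose ν : ℚ) * ((m.choose k : ℚ) * ((k + m).choose (m - 1)) * bernoulli (k + 1)) :=
        Finset.sum_congr rfl (fun k _ => hterm k)
    _ = ((m - 1).choose ν : ℚ) * ∑ k ∈ (Finset.range m).filter (fun k => Odd (k + m)),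
        ((m.choose k : ℚ) * ((k + m).choose (m - 1)) * bernoulli (k + 1)) := by rw [Finset.mul_sum]
    _ = ((m - 1).choose ν : ℚ) * ((-1 : ℚ) ^ m * (m / 2)) := by rw [key]
    _ = (-1 : ℚ) ^ m * (m / 2) * ((m - 1).choose ν) := by ring
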